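/- Let X ⊆ B_d, fix an integer k ≥ 1 and reals β, B, β̂, B̂ ≥ 0. Suppose F* ⊆ B_d with |F*| = k satisfies sup_{x∈X} κ(x, F*) ≤ β·OPT + B, and let S ⊆ X be a finite set such that for every f ∈ F* there exists x_f ∈ S whose nearest point in F* is f. Suppose F̂ ⊆ B_d satisfies max_{x∈S} κ(x, F̂) ≤ β̂·ÔPT + B̂, where ÔPT := inf over F ⊆ B_d with |F| = k of max_{x∈S} κ(x, F). Then for every x ∈ X, κ(x, F̂) ≤ (2β + β̂)·OPT + 2B + B̂. -/

import Mathlib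

/-- `κ(x, F) = min_{f ∈ F} N (x - f)`. -/
noncomputable def setDist {d : ℕ} (N : Seminorm ℝ (Fin d → ℝ))
    (x : Fin d → ℝ) (F : Finset (Fin d → ℝ)) : ℝ :=
  sInf {r | ∃ f ∈ F, r = N (x - f)}

/-- `B_d`: the `κ`-ball of diameter 1 centered at the origin. -/
def ballD {d : ℕ} (N : Seminorm ℝ (Fin d → ℝ)) : Set (Fin d → ℝ) := {x | N x ≤ 1 / 2}

/-- The statistical `k`-centers cost of `F` over the domain `Y`: `sup_{x ∈ Y} κ(x, F)`. -/
noncomputable def kcCost {d : ℕ} (N : Seminorm ℝ (Fin d → ℝ))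
    (Y : Set (Fin d → ℝ)) (F : Finset (Fin d → ℝ)) : ℝ :=
  sSup {t | ∃ x ∈ Y, t = setDist N x F}

/-- The optimal statistical `k`-centers cost over the domain `Y`, with centers in `B_d`. -/
noncomputable def kcOPT {d : ℕ} (N : Seminorm ℝ (Fin d → ℝ))
    (k : ℕ) (Y : Set (Fin d → ℝ)) : ℝ :=
  sInf {r | ∃ F : Finset (Fin d → ℝ), ↑F ⊆ ballD N ∧ F.card = k ∧ r = kcCost N Y F}

lemma setDist_nonneg {d : ℕ} (N : Seminorm ℝ (Fin d → ℝ)) (x : Fin d → ℝ)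
    (F : Finset (Fin d → ℝ)) : 0 ≤ setDist N x F := by
  apply Real.sInf_nonneg
  rintro r ⟨f, hf, rfl⟩
  exact apply_nonneg N _

lemma setDist_le {d : ℕ} (N : Seminorm ℝ (Fin d → ℝ)) (x : Fin d → ℝ)
    {F : Finset (Fin d → ℝ)} {f : Fin d → ℝ} (hf : f ∈ F) :
    setDist N x F ≤ N (x - f) := by
  apply csInf_le
  · exact ⟨0, by rintro r ⟨g, hg, rfl⟩; exact apply_nonneg N _⟩
  · exact ⟨f, hf, rfl⟩

lemma exists_setDist_eq {d : ℕ} (N : Seminorm ℝ (Fin d → ℝ)) (x : Fin d → ℝ)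
    {F : Finset (Fin d → ℝ)} (hF : F.Nonempty) :
    ∃ f ∈ F, setDist N x F = N (x - f) := by
  have hset : {r | ∃ f ∈ F, r = (N (x - f) : ℝ)}
      = ↑(F.image fun f => (N (x - f) : ℝ)) := by
    ext r; simp [eq_comm]
  have h : setDist N x F ∈ {r | ∃ f ∈ F, r = (N (x - f) : ℝ)} := by
    apply Set.Nonempty.csInf_mem
    · obtain ⟨f, hf⟩ := hF; exact ⟨_, f, hf, rfl⟩
    · rw [hset]; exact (F.image _).finite_toSet
  exact h

lemma setDist_triangle {d : ℕ} (N : Seminorm ℝ (Fin d → ℝ)) (x y : Fin d → ℝ)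
    (F : Finset (Fin d → ℝ)) :
    setDist N x F ≤ N (x - y) + setDist N y F := by
  rcases F.eq_empty_or_nonempty with rfl | hF
  · have h1 : setDist N x (∅ : Finset (Fin d → ℝ)) = 0 := by
      simp [setDist, Real.sInf_empty]
    have h2 : setDist N y (∅ : Finset (Fin d → ℝ)) = 0 := by
      simp [setDist, Real.sInf_empty]
    rw [h1, h2]
    simpa using apply_nonneg N (x - y)
  · obtain ⟨f, hf, hfd⟩ := exists_setDist_eq N y hF
    calc setDist N x F ≤ N (x - f) := setDist_le N x hf
      _ ≤ N (x - y) + N (y - f) := by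
          have : x - f = (x - y) + (y - f) := by abel
          rw [this]; exact map_add_le_add N _ _
      _ = N (x - y) + setDist N y F := by rw [hfd]

lemma setDist_le_one {d : ℕ} (N : Seminorm ℝ (Fin d → ℝ)) {x : Fin d → ℝ}
    (hx : x ∈ ballD N) {F : Finset (Fin d → ℝ)} (hFsub : ↑F ⊆ ballD N)
    (hF : F.Nonempty) : setDist N x F ≤ 1 := by
  obtain ⟨f, hf⟩ := hF
  calc setDist N x F ≤ N (x - f) := setDist_le N x hf
    _ ≤ N x + N f := map_sub_le_add N x f
    _ ≤ 1 / 2 + 1 / 2 := add_le_add hx (hFsub hf)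
    _ = 1 := by norm_num

/-- `k`-centers oracle on a sample: if `F*` is a `(β,B)`-approximate solution, the sample
`S` contains a point from each cluster of `F*`, and `F̂` is a `(β̂,B̂)`-approximate solution
of the combinatorial `k`-centers problem on `S`, then `F̂` is a
`(2β+β̂, 2B+B̂)`-approximate solution for the statistical problem. -/
theorem k_centers_oracle_on_sample {d k : ℕ} (hk : 1 ≤ k)
    (N : Seminorm ℝ (Fin d → ℝ)) (hNdef : ∀ x, N x = 0 → x = 0)
    (X : Set (Fin d → ℝ)) (hX : X ⊆ ballD N)
    (β B βh Bh : ℝ) (hβ : 0 ≤ β) (hB : 0 ≤ B) (hβh : 0 ≤ βh) (hBh : 0 ≤ Bh)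
    (Fstar : Finset (Fin d → ℝ)) (hFstarSub : ↑Fstar ⊆ ballD N) (hFstarCard : Fstar.card = k)
    (hFstarApx : ∀ x ∈ X, setDist N x Fstar ≤ β * kcOPT N k X + B)
    (S : Finset (Fin d → ℝ)) (hS : ↑S ⊆ X)
    (hScover : ∀ f ∈ Fstar, ∃ x ∈ S, ∀ f' ∈ Fstar, (N (x - f) : ℝ) ≤ N (x - f'))
    (Fhat : Finset (Fin d → ℝ)) (hFhatSub : ↑Fhat ⊆ ballD N)
    (hFhatApx : ∀ x ∈ S, setDist N x Fhat
      ≤ βh * sInf {r | ∃ F : Finset (Fin d → ℝ), ↑F ⊆ ballD N ∧ F.card = k ∧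
            r = sSup {t | ∃ x ∈ (S : Set (Fin d → ℝ)), t = setDist N x F}} + Bh) :
    ∀ x ∈ X, setDist N x Fhat ≤ (2 * β + βh) * kcOPT N k X + 2 * B + Bh := by
  intro x hx
  set OPT := kcOPT N k X with hOPT
  set OPTh := sInf {r | ∃ F : Finset (Fin d → ℝ), ↑F ⊆ ballD N ∧ F.card = k ∧
      r = sSup {t | ∃ x ∈ (S : Set (Fin d → ℝ)), t = setDist N x F}} with hOPTh
  have hFstarNe : Fstar.Nonempty := Finset.card_pos.mp (by omega)
  have hSNe : S.Nonempty := by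
    obtain ⟨f0, hf0⟩ := hFstarNe
    obtain ⟨x0, hx0, _⟩ := hScover f0 hf0
    exact ⟨x0, hx0⟩
  -- OPTh ≤ OPT
  have hOPThle : OPTh ≤ OPT := by
    rw [hOPT, kcOPT]
    apply le_csInf
    · exact ⟨kcCost N X Fstar, Fstar, hFstarSub, hFstarCard, rfl⟩
    · rintro r ⟨F, hFsub, hFcard, rfl⟩
      have hFNe : F.Nonempty := Finset.card_pos.mp (by omega)
      have hbddX : ∀ t ∈ {t | ∃ y ∈ X, t = setDist N y F}, t ≤ 1 := by
        rintro t ⟨y, hy, rfl⟩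
        exact setDist_le_one N (hX hy) hFsub hFNe
      have hle : sSup {t | ∃ y ∈ (S : Set (Fin d → ℝ)), t = setDist N y F}
          ≤ kcCost N X F := by
        apply csSup_le_csSup
        · exact ⟨1, hbddX⟩
        · obtain ⟨s0, hs0⟩ := hSNe; exact ⟨_, s0, hs0, rfl⟩
        · rintro t ⟨y, hyS, rfl⟩; exact ⟨y, hS hyS, rfl⟩
      refine le_trans ?_ hle
      apply csInf_le
      · refine ⟨0, ?_⟩
        rintro r ⟨G, hGsub, hGcard, rfl⟩
        have hGNe : G.Nonempty := Finset.card_pos.mp (by omega)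
        obtain ⟨s0, hs0⟩ := hSNe
        have hbddSG : BddAbove {t | ∃ y ∈ (S : Set (Fin d → ℝ)), t = setDist N y G} := by
          refine ⟨1, ?_⟩
          rintro t ⟨y, hy, rfl⟩
          exact setDist_le_one N (hX (hS hy)) hGsub hGNe
        calc (0 : ℝ) ≤ setDist N s0 G := setDist_nonneg N s0 G
          _ ≤ _ := le_csSup hbddSG ⟨s0, hs0, rfl⟩
      · exact ⟨F, hFsub, hFcard, rfl⟩
  -- nearest center to x in Fstar
  obtain ⟨fs, hfs, hfd⟩ := exists_setDist_eq N x hFstarNe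
  obtain ⟨xf, hxfS, hxfmin⟩ := hScover fs hfs
  have h1 : (N (xf - fs) : ℝ) ≤ setDist N xf Fstar := by
    obtain ⟨f', hf', hd'⟩ := exists_setDist_eq N xf hFstarNe
    rw [hd']; exact hxfmin f' hf'
  have hx_star : (N (x - fs) : ℝ) ≤ β * OPT + B := by
    rw [← hfd]; exact hFstarApx x hx
  have hxf_star : (N (xf - fs) : ℝ) ≤ β * OPT + B :=
    le_trans h1 (hFstarApx xf (hS hxfS))
  have hxf_hat : setDist N xf Fhat ≤ βh * OPTh + Bh := hFhatApx xf hxfS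
  have hOPThmul : βh * OPTh ≤ βh * OPT := mul_le_mul_of_nonneg_left hOPThle hβh
  calc setDist N x Fhat ≤ N (x - xf) + setDist N xf Fhat := setDist_triangle N x xf Fhat
    _ ≤ (N (x - fs) + N (fs - xf)) + setDist N xf Fhat := by
        have : x - xf = (x - fs) + (fs - xf) := by abel
        have h := map_add_le_add N (x - fs) (fs - xf)
        rw [this]
        exact add_le_add_left h _
    _ = (N (x - fs) + N (xf - fs)) + setDist N xf Fhat := by rw [map_sub_rev N fs xf]
    _ ≤ ((β * OPT + B) + (β * OPT + B)) + (βh * OPTh + Bh) :=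
        add_le_add (add_le_add hx_star hxf_star) hxf_hat
    _ ≤ ((β * OPT + B) + (β * OPT + B)) + (βh * OPT + Bh) := by
        have := add_le_add_right hOPThmul Bh
        linarith
    _ = (2 * β + βh) * OPT + 2 * B + Bh := by ring
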